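/- For all n ≥ 3, the cycle C_n on n vertices satisfies th_-(C_n) = ⌈√(2n) − 1/2⌉. -/

import Mathlib

open SimpleGraph

/-- One round of skew zero forcing: every vertex (blue or white) with exactly one
white neighbor colors that neighbor blue. -/
def skewStep {V : Type*} (G : SimpleGraph V) (B : Set V) : Set V :=
  B ∪ {w | ∃ v, G.Adj v w ∧ ∀ u, G.Adj v u → u ∉ B → u = w}

/-- The set of blue vertices after `n` rounds of skew zero forcing starting from `S`. -/
def skewIter {V : Type*} (G : SimpleGraph V) (S : Set V) : ℕ → Set V
  | 0 => S
  | n + 1 => skewStep G (skewIter G S n)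

/-- `S` is a skew zero forcing set of `G`. -/
def IsSkewZFS {V : Type*} (G : SimpleGraph V) (S : Set V) : Prop :=
  ∃ n, skewIter G S n = Set.univ

/-- The skew propagation time `pt₋(G;S)`: the number of rounds needed for all
vertices to become blue. -/
noncomputable def skewPt {V : Type*} (G : SimpleGraph V) (S : Set V) : ℕ :=
  sInf {n | skewIter G S n = Set.univ}

/-- The skew throttling number `th₋(G)`. -/
noncomputable def skewTh {V : Type*} (G : SimpleGraph V) : ℕ :=
  sInf {m | ∃ S : Set V, IsSkewZFS G S ∧ m = S.ncard + skewPt G S}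

/-- The skew throttling number over sets of size `k`, `th₋(G,k)`. -/
noncomputable def skewThK {V : Type*} (G : SimpleGraph V) (k : ℕ) : ℕ :=
  sInf {m | ∃ S : Set V, IsSkewZFS G S ∧ S.ncard = k ∧ m = S.ncard + skewPt G S}

/-- The skew zero forcing number `Z₋(G)`. -/
noncomputable def skewZ {V : Type*} (G : SimpleGraph V) : ℕ :=
  sInf {m | ∃ S : Set V, IsSkewZFS G S ∧ m = S.ncard}

/-- The skew propagation time `pt₋(G)`: minimum propagation time over minimum
skew zero forcing sets. -/
noncomputable def skewPtMin {V : Type*} (G : SimpleGraph V) : ℕ :=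
  sInf {m | ∃ S : Set V, IsSkewZFS G S ∧ S.ncard = skewZ G ∧ m = skewPt G S}

/-- `rK₂`: the disjoint union of `r` copies of `K₂`. -/
def rK2 (r : ℕ) : SimpleGraph (Fin r × Fin 2) :=
  SimpleGraph.fromRel (fun a b => a.1 = b.1)

/-- Disjoint union of two simple graphs. -/
def disjUnion {α β : Type*} (G : SimpleGraph α) (H : SimpleGraph β) :
    SimpleGraph (α ⊕ β) :=
  SimpleGraph.fromRel (fun x y =>
    match x, y with
    | Sum.inl a, Sum.inl b => G.Adj a b
    | Sum.inr a, Sum.inr b => H.Adj a b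
    | _, _ => False)

/-- The corona `G ∘ K₁`: attach a pendant leaf to every vertex of `G`. -/
def coronaK1 {α : Type*} (G : SimpleGraph α) : SimpleGraph (α ⊕ α) :=
  SimpleGraph.fromRel (fun x y =>
    match x, y with
    | Sum.inl a, Sum.inl b => G.Adj a b
    | Sum.inl a, Sum.inr b => a = b
    | _, _ => False)

/-- The corona `G ∘ K₂`: attach a private copy of `K₂` (a triangle) to every
vertex of `G`. -/
def coronaK2 {α : Type*} (G : SimpleGraph α) : SimpleGraph (α ⊕ α × Fin 2) :=
  SimpleGraph.fromRel (fun x y =>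
    match x, y with
    | Sum.inl a, Sum.inl b => G.Adj a b
    | Sum.inl a, Sum.inr b => a = b.1
    | Sum.inr a, Sum.inr b => a.1 = b.1
    | _, _ => False)

/-- The graph `H(s,t)` with hub `b`, pendant paths `b xᵢ yᵢ` and triangles `b zᵢ wᵢ`. -/
def Hgraph (s t : ℕ) : SimpleGraph (Unit ⊕ ((Fin s × Fin 2) ⊕ (Fin t × Fin 2))) :=
  SimpleGraph.fromRel (fun x y =>
    match x, y with
    | Sum.inl _, Sum.inr (Sum.inl p) => p.2 = 0
    | Sum.inl _, Sum.inr (Sum.inr _) => True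
    | Sum.inr (Sum.inl p), Sum.inr (Sum.inl q) => p.1 = q.1
    | Sum.inr (Sum.inr p), Sum.inr (Sum.inr q) => p.1 = q.1
    | _, _ => False)

/-- The friendship graph `Fₙ`: a universal vertex joined to `n` disjoint copies of `K₂`. -/
def friendshipGraph (n : ℕ) : SimpleGraph (Unit ⊕ (Fin n × Fin 2)) :=
  SimpleGraph.fromRel (fun x y =>
    match x, y with
    | Sum.inl _, Sum.inr _ => True
    | Sum.inr p, Sum.inr q => p.1 = q.1
    | _, _ => False)

/-- The balanced spider `T_{p,ℓ}`: a center with `p` legs of `ℓ` vertices each. -/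
def spider (p ℓ : ℕ) : SimpleGraph (Unit ⊕ (Fin p × Fin ℓ)) :=
  SimpleGraph.fromRel (fun x y =>
    match x, y with
    | Sum.inl _, Sum.inr q => q.2.val = 0
    | Sum.inr q, Sum.inr q' => q.1 = q'.1 ∧ q'.2.val = q.2.val + 1
    | _, _ => False)

/-- The hypercube graph `Qₙ`: binary strings of length `n`, adjacent iff they
differ in exactly one coordinate. -/
def hypercube (n : ℕ) : SimpleGraph (Fin n → Bool) :=
  SimpleGraph.fromRel (fun x y => ∃! i, x i ≠ y i)
open scoped Fin.IntCast Fin.NatCast Fin.CommRing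

section SkewCycleAux

variable {n : ℕ}

lemma two_ne (h3 : 3 ≤ n) [NeZero n] : (2 : Fin n) ≠ 0 := by
  intro h
  have h2 : ((2 : ℕ) : Fin n) = 0 := by exact_mod_cast h
  have := congrArg Fin.val h2
  rw [Fin.val_natCast, Nat.mod_eq_of_lt (by omega), Fin.val_zero] at this
  omega

lemma cycle_adj [NeZero n] (h3 : 3 ≤ n) (v u : Fin n) :
    (SimpleGraph.cycleGraph n).Adj v u ↔ u = v - 1 ∨ u = v + 1 := by
  rw [SimpleGraph.cycleGraph_adj']
  have h1 : (1 : Fin n).val = 1 := by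
    have : ((1 : ℕ) : Fin n).val = 1 % n := Fin.val_natCast 1 n
    simpa [Nat.mod_eq_of_lt (show 1 < n by omega)] using this
  constructor
  · rintro (h | h)
    · left
      have : v - u = 1 := Fin.ext (by rw [h, h1])
      linear_combination -this
    · right
      have : u - v = 1 := Fin.ext (by rw [h, h1])
      linear_combination this
  · rintro (h | h)
    · left; rw [h]; rw [show v - (v-1) = 1 by ring, h1]
    · right; rw [h]; rw [show v + 1 - v = 1 by ring, h1]

lemma cycle_skewStep [NeZero n] (h3 : 3 ≤ n) (B : Set (Fin n)) (x : Fin n) :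
    x ∈ skewStep (cycleGraph n) B ↔ x ∈ B ∨ x - 2 ∈ B ∨ x + 2 ∈ B := by
  constructor
  · rintro (hx | ⟨v, hadj, hall⟩)
    · exact Or.inl hx
    rcases (cycle_adj h3 v x).mp hadj with h | h
    · -- x = v - 1, i.e. v = x + 1 ; other neighbor of v is v + 1 = x + 2
      right; right
      by_contra hB
      have := hall (v + 1) ((cycle_adj h3 v (v+1)).mpr (Or.inr rfl))
        (by rwa [show v + 1 = x + 2 by linear_combination -h])
      have h2 : (2 : Fin n) = 0 := by linear_combination this + h
      exact two_ne h3 h2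
    · -- x = v + 1, i.e. v = x - 1 ; other neighbor of v is v - 1 = x - 2
      right; left
      by_contra hB
      have := hall (v - 1) ((cycle_adj h3 v (v-1)).mpr (Or.inl rfl))
        (by rwa [show v - 1 = x - 2 by linear_combination -h])
      have h2 : (2 : Fin n) = 0 := by linear_combination -this - h
      exact two_ne h3 h2
  · rintro (hx | hx | hx)
    · exact Or.inl hx
    · refine Or.inr ⟨x - 1, (cycle_adj h3 _ _).mpr (Or.inr (by ring)), ?_⟩
      intro u hu hunB
      rcases (cycle_adj h3 _ u).mp hu with h | h
      · exfalso
        have hu2 : u = x - 2 := by rw [h]; ring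
        exact hunB (by rw [hu2]; exact hx)
      · rw [h]; ring
    · refine Or.inr ⟨x + 1, (cycle_adj h3 _ _).mpr (Or.inl (by ring)), ?_⟩
      intro u hu hunB
      rcases (cycle_adj h3 _ u).mp hu with h | h
      · rw [h]; ring
      · exfalso; exact hunB (by rw [h, show x + 1 + 1 = x + 2 by ring]; exact hx)

lemma cycle_skewIter [NeZero n] (h3 : 3 ≤ n) (S : Set (Fin n)) (t : ℕ) (x : Fin n) :
    x ∈ skewIter (cycleGraph n) S t ↔
      ∃ s ∈ S, ∃ j : ℤ, j.natAbs ≤ t ∧ x = s + ((2*j : ℤ) : Fin n) := by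
  induction t generalizing x with
  | zero =>
    simp only [skewIter]
    constructor
    · intro hx; exact ⟨x, hx, 0, by simp⟩
    · rintro ⟨s, hs, j, hj, hx⟩
      have hj0 : j = 0 := by omega
      subst hj0
      norm_num at hx
      exact hx ▸ hs
  | succ t ih =>
    rw [show skewIter (cycleGraph n) S (t+1)
          = skewStep (cycleGraph n) (skewIter (cycleGraph n) S t) from rfl,
        cycle_skewStep h3]
    constructor
    · rintro (hx | hx | hx)
      · obtain ⟨s, hs, j, hj, h⟩ := (ih x).mp hx
        exact ⟨s, hs, j, by omega, h⟩
      · obtain ⟨s, hs, j, hj, h⟩ := (ih (x - 2)).mp hx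
        refine ⟨s, hs, j + 1, by omega, ?_⟩
        have hc : ((2*(j+1) : ℤ) : Fin n) = ((2*j : ℤ) : Fin n) + 2 := by
          push_cast; ring
        rw [hc]; linear_combination h
      · obtain ⟨s, hs, j, hj, h⟩ := (ih (x + 2)).mp hx
        refine ⟨s, hs, j - 1, by omega, ?_⟩
        have hc : ((2*(j-1) : ℤ) : Fin n) = ((2*j : ℤ) : Fin n) - 2 := by
          push_cast; ring
        rw [hc]; linear_combination h
    · rintro ⟨s, hs, j, hj, hx⟩
      by_cases h : j.natAbs ≤ t
      · exact Or.inl ((ih x).mpr ⟨s, hs, j, h, hx⟩)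
      · rcases lt_trichotomy j 0 with hneg | h0 | hpos
        · right; right
          refine (ih (x + 2)).mpr ⟨s, hs, j + 1, by omega, ?_⟩
          have hc : ((2*(j+1) : ℤ) : Fin n) = ((2*j : ℤ) : Fin n) + 2 := by
            push_cast; ring
          rw [hc]; linear_combination hx
        · omega
        · right; left
          refine (ih (x - 2)).mpr ⟨s, hs, j - 1, by omega, ?_⟩
          have hc : ((2*(j-1) : ℤ) : Fin n) = ((2*j : ℤ) : Fin n) - 2 := by
            push_cast; ring
          rw [hc]; linear_combination hx

lemma card_bound [NeZero n] (S : Set (Fin n)) (p : ℕ)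
    (hcov : ∀ x : Fin n, ∃ s ∈ S, ∃ j : ℤ, j.natAbs ≤ p ∧ x = s + ((2*j : ℤ) : Fin n)) :
    n ≤ S.ncard * (2*p + 1) := by
  classical
  have hsurj : Set.SurjOn (fun q : Fin n × ℤ => q.1 + ((2*q.2 : ℤ) : Fin n))
      ↑(S.toFinset ×ˢ Finset.Icc (-(p:ℤ)) (p:ℤ)) ↑(Finset.univ : Finset (Fin n)) := by
    intro x _
    obtain ⟨s, hs, j, hj, hx⟩ := hcov x
    refine ⟨(s, j), ?_, hx.symm⟩
    simp only [Finset.coe_product, Set.mem_prod, Finset.mem_coe, Set.mem_toFinset,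
      Finset.coe_Icc, Set.mem_Icc]
    exact ⟨hs, by omega, by omega⟩
  have h1 := Finset.card_le_card_of_surjOn _ hsurj
  rw [Finset.card_univ, Fintype.card_fin, Finset.card_product, Int.card_Icc] at h1
  have h2 : ((p:ℤ) + 1 - (-(p:ℤ))).toNat = 2*p + 1 := by omega
  rw [h2] at h1
  rwa [Set.ncard_eq_toFinset_card']

lemma cast_helper [NeZero n] (c a : ℕ) (j d : ℤ)
    (key : (c:ℤ) + 2*j = (a:ℤ) + (n:ℤ)*d) :
    ((a : ℕ) : Fin n) = ((c : ℕ) : Fin n) + ((2*j : ℤ) : Fin n) := by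
  have h : (((c:ℤ) + 2*j : ℤ) : Fin n) = (((a:ℤ) + (n:ℤ)*d : ℤ) : Fin n) := by rw [key]
  push_cast [Fin.natCast_self] at h
  push_cast
  linear_combination -h

lemma pairs_cover [NeZero n] (r p : ℕ) (hn : n ≤ 2*r*(2*p+1)) :
    ∃ S : Set (Fin n), S.ncard ≤ 2*r ∧
      ∀ x : Fin n, ∃ s ∈ S, ∃ j : ℤ, j.natAbs ≤ p ∧ x = s + ((2*j : ℤ) : Fin n) := by
  classical
  set f : ℕ → Fin n := fun i => ((i/2)*(4*p+2) + 2*p + i % 2 : ℕ) with hf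
  refine ⟨f '' ↑(Finset.range (2*r)), ?_, ?_⟩
  · calc (f '' ↑(Finset.range (2*r))).ncard ≤ (↑(Finset.range (2*r)) : Set ℕ).ncard :=
        Set.ncard_image_le (Finset.finite_toSet _)
      _ = 2*r := by rw [Set.ncard_coe_finset, Finset.card_range]
  · intro x
    obtain ⟨a, han, rfl⟩ : ∃ a : ℕ, a < n ∧ ((a : ℕ) : Fin n) = x :=
      ⟨x.val, x.isLt, Fin.cast_val_eq_self x⟩
    have hrn : n ≤ r * (4*p+2) := by nlinarith
    set i := a / (4*p+2) with hi'
    set b := a % (4*p+2) with hb'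
    have hi : i < r := (Nat.div_lt_iff_lt_mul (by omega)).mpr (by omega)
    have hblt : b < 4*p+2 := Nat.mod_lt _ (by omega)
    set m := 2*i + b % 2 with hm'
    have hmlt : m < 2*r := by omega
    have hm1 : m / 2 = i := by omega
    have hm2 : m % 2 = b % 2 := by omega
    set c := i*(4*p+2) + 2*p + b % 2 with hc'
    have hfm : f m = ((c : ℕ) : Fin n) := by rw [hf]; simp only [hm1, hm2]; rfl
    set j : ℤ := ((b / 2 : ℕ) : ℤ) - (p : ℤ) with hj'
    have hjle : j.natAbs ≤ p := by
      have : b / 2 ≤ 2*p := by omega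
      omega
    refine ⟨f m, Set.mem_image_of_mem f (by simp [hmlt]), j, hjle, ?_⟩
    rw [hfm]
    refine cast_helper c a j 0 ?_
    have h1 : (4*p+2) * i + b = a := by rw [hi', hb']; exact Nat.div_add_mod a (4*p+2)
    have h2 : 2 * (b / 2) + b % 2 = b := Nat.div_add_mod b 2
    have h1' : ((4*(p:ℤ)+2) * i + b : ℤ) = a := by exact_mod_cast h1
    have h2' : (2 * ((b:ℕ)/2 : ℕ) + ((b:ℕ) % 2 : ℕ) : ℤ) = b := by exact_mod_cast h2
    rw [hc', hj']
    push_cast at h1' h2' ⊢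
    linear_combination h1' + h2'

lemma odd_cover [NeZero n] (hodd : n % 2 = 1) (k p : ℕ) (hn : n ≤ k*(2*p+1)) :
    ∃ S : Set (Fin n), S.ncard ≤ k ∧
      ∀ x : Fin n, ∃ s ∈ S, ∃ j : ℤ, j.natAbs ≤ p ∧ x = s + ((2*j : ℤ) : Fin n) := by
  classical
  set f : ℕ → Fin n := fun i => ((2*(i*(2*p+1) + p) : ℕ) : Fin n) with hf
  refine ⟨f '' ↑(Finset.range k), ?_, ?_⟩
  · calc (f '' ↑(Finset.range k)).ncard ≤ (↑(Finset.range k) : Set ℕ).ncard :=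
        Set.ncard_image_le (Finset.finite_toSet _)
      _ = k := by rw [Set.ncard_coe_finset, Finset.card_range]
  · intro x
    obtain ⟨w, hwn, rfl⟩ : ∃ w : ℕ, w < n ∧ ((w : ℕ) : Fin n) = x :=
      ⟨x.val, x.isLt, Fin.cast_val_eq_self x⟩
    have hn0 : 0 < n := by omega
    set h2n : ℕ := (n+1)/2 with hh
    set a := (w * h2n) % n with ha'
    set q := (w * h2n) / n with hq'
    have han : a < n := Nat.mod_lt _ hn0
    set i := a / (2*p+1) with hi'
    set b := a % (2*p+1) with hb'
    have hi : i < k := (Nat.div_lt_iff_lt_mul (by omega)).mpr (by omega)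
    have hblt : b < 2*p+1 := Nat.mod_lt _ (by omega)
    set j : ℤ := (b : ℤ) - (p : ℤ) with hj'
    have hjle : j.natAbs ≤ p := by omega
    refine ⟨f i, Set.mem_image_of_mem f (by simp [hi]), j, hjle, ?_⟩
    rw [hf]
    simp only []
    refine cast_helper (2*(i*(2*p+1) + p)) w j ((w : ℤ) - 2*(q : ℤ)) ?_
    have h1 : (2*p+1) * i + b = a := by rw [hi', hb']; exact Nat.div_add_mod a (2*p+1)
    have h2 : n * q + a = w * h2n := by rw [hq', ha']; exact Nat.div_add_mod (w * h2n) n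
    have h3 : 2 * h2n = n + 1 := by omega
    have h1' : ((2*(p:ℤ)+1) * i + b : ℤ) = a := by exact_mod_cast h1
    have h2' : ((n:ℤ) * q + a : ℤ) = w * h2n := by exact_mod_cast h2
    have h3' : (2 : ℤ) * h2n = (n:ℤ) + 1 := by exact_mod_cast h3
    rw [hj']
    push_cast at h1' h2' h3' ⊢
    linear_combination 2*h1' + 2*h2' + (w : ℤ)*h3'

end SkewCycleAux

/-- `th₋(Cₙ) = ⌈√(2n) - 1/2⌉` for `n ≥ 3`. -/
theorem skewTh_cycleGraph (n : ℕ) (hn : 3 ≤ n) :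
    (skewTh (SimpleGraph.cycleGraph n) : ℤ) = ⌈Real.sqrt (2 * n) - 1 / 2⌉ := by
  haveI : NeZero n := ⟨by omega⟩
  have hex : ∃ N : ℕ, 2*n ≤ N*N + N := ⟨2*n, by nlinarith⟩
  set N := Nat.find hex with hNdef
  have hNs : 2*n ≤ N*N + N := Nat.find_spec hex
  have hN2 : 2 ≤ N := by
    by_contra h
    have h1 : N*N ≤ 1 := by nlinarith
    omega
  -- upper bound witness
  obtain ⟨k, p, hk1, hkp, S, hcard, hcov⟩ :
      ∃ k p : ℕ, 1 ≤ k ∧ k + p = N ∧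
        ∃ S : Set (Fin n), S.ncard ≤ k ∧
          ∀ x : Fin n, ∃ s ∈ S, ∃ j : ℤ, j.natAbs ≤ p ∧ x = s + ((2*j : ℤ) : Fin n) := by
    rcases Nat.even_or_odd n with ⟨c, hc⟩ | hodd
    · -- n even : use pairs
      rcases (by omega : N % 4 = 0 ∨ N % 4 = 1 ∨ N % 4 = 2 ∨ N % 4 = 3) with h4 | h4 | h4 | h4
      · obtain ⟨q, hq⟩ : ∃ q, N = 4*q := ⟨N/4, by omega⟩
        refine ⟨2*q, 2*q, by omega, by omega, pairs_cover q (2*q) ?_⟩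
        have h2 : 2*n ≤ 16*(q*q) + 4*q := by
          calc 2*n ≤ N*N + N := hNs
            _ = 16*(q*q) + 4*q := by rw [hq]; ring
        have hg : 2*q*(2*(2*q)+1) = 8*(q*q) + 2*q := by ring
        rw [hg]
        obtain ⟨Q, hQ⟩ : ∃ Q, q*q = Q := ⟨_, rfl⟩
        rw [hQ] at h2 ⊢
        omega
      · obtain ⟨q, hq⟩ : ∃ q, N = 4*q + 1 := ⟨N/4, by omega⟩
        refine ⟨2*q, 2*q+1, by omega, by omega, pairs_cover q (2*q+1) ?_⟩
        have h2 : 2*n ≤ 16*(q*q) + 12*q + 2 := by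
          calc 2*n ≤ N*N + N := hNs
            _ = 16*(q*q) + 12*q + 2 := by rw [hq]; ring
        have hg : 2*q*(2*(2*q+1)+1) = 8*(q*q) + 6*q := by ring
        rw [hg]
        obtain ⟨Q, hQ⟩ : ∃ Q, q*q = Q := ⟨_, rfl⟩
        rw [hQ] at h2 ⊢
        omega
      · obtain ⟨q, hq⟩ : ∃ q, N = 4*q + 2 := ⟨N/4, by omega⟩
        refine ⟨2*(q+1), 2*q, by omega, by omega, pairs_cover (q+1) (2*q) ?_⟩
        have h2 : 2*n ≤ 16*(q*q) + 20*q + 6 := by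
          calc 2*n ≤ N*N + N := hNs
            _ = 16*(q*q) + 20*q + 6 := by rw [hq]; ring
        have hg : 2*(q+1)*(2*(2*q)+1) = 8*(q*q) + 10*q + 2 := by ring
        rw [hg]
        obtain ⟨Q, hQ⟩ : ∃ Q, q*q = Q := ⟨_, rfl⟩
        rw [hQ] at h2 ⊢
        omega
      · obtain ⟨q, hq⟩ : ∃ q, N = 4*q + 3 := ⟨N/4, by omega⟩
        refine ⟨2*(q+1), 2*q+1, by omega, by omega, pairs_cover (q+1) (2*q+1) ?_⟩
        have h2 : 2*n ≤ 16*(q*q) + 28*q + 12 := by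
          calc 2*n ≤ N*N + N := hNs
            _ = 16*(q*q) + 28*q + 12 := by rw [hq]; ring
        have hg : 2*(q+1)*(2*(2*q+1)+1) = 8*(q*q) + 14*q + 6 := by ring
        rw [hg]
        obtain ⟨Q, hQ⟩ : ∃ Q, q*q = Q := ⟨_, rfl⟩
        rw [hQ] at h2 ⊢
        omega
    · -- n odd : use singletons
      have hodd' : n % 2 = 1 := Nat.odd_iff.mp hodd
      rcases Nat.even_or_odd N with ⟨a, ha⟩ | ⟨a, ha⟩
      · refine ⟨a, a, by omega, by omega, odd_cover hodd' a a ?_⟩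
        have h2 : 2*n ≤ 4*(a*a) + 2*a := by
          calc 2*n ≤ N*N + N := hNs
            _ = 4*(a*a) + 2*a := by rw [ha]; ring
        have hg : a*(2*a+1) = 2*(a*a) + a := by ring
        rw [hg]
        obtain ⟨Q, hQ⟩ : ∃ Q, a*a = Q := ⟨_, rfl⟩
        rw [hQ] at h2 ⊢
        omega
      · refine ⟨a+1, a, by omega, by omega, odd_cover hodd' (a+1) a ?_⟩
        have h2 : 2*n ≤ 4*(a*a) + 6*a + 2 := by
          calc 2*n ≤ N*N + N := hNs
            _ = 4*(a*a) + 6*a + 2 := by rw [ha]; ring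
        have hg : (a+1)*(2*a+1) = 2*(a*a) + 3*a + 1 := by ring
        rw [hg]
        obtain ⟨Q, hQ⟩ : ∃ Q, a*a = Q := ⟨_, rfl⟩
        rw [hQ] at h2 ⊢
        omega
  have huniv : skewIter (SimpleGraph.cycleGraph n) S p = Set.univ :=
    Set.eq_univ_of_forall fun x => (cycle_skewIter hn S p x).mpr (hcov x)
  have hzfs : IsSkewZFS (SimpleGraph.cycleGraph n) S := ⟨p, huniv⟩
  have hptle : skewPt (SimpleGraph.cycleGraph n) S ≤ p := Nat.sInf_le huniv
  -- every member of the throttling set is ≥ N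
  have hz : ∀ z : ℤ, 0 ≤ z*(z-1) := by
    intro z
    rcases le_or_gt z 0 with h | h
    · calc (0:ℤ) ≤ (-z)*(-(z-1)) := mul_nonneg (by omega) (by omega)
        _ = z*(z-1) := by ring
    · exact mul_nonneg (by omega) (by omega)
  have hlowmem : ∀ m, (∃ T : Set (Fin n), IsSkewZFS (SimpleGraph.cycleGraph n) T ∧
      m = T.ncard + skewPt (SimpleGraph.cycleGraph n) T) → N ≤ m := by
    rintro m ⟨T, hT, rfl⟩
    have hne : {t | skewIter (SimpleGraph.cycleGraph n) T t = Set.univ}.Nonempty := hT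
    have hq1 : skewIter (SimpleGraph.cycleGraph n) T
        (skewPt (SimpleGraph.cycleGraph n) T) = Set.univ := Nat.sInf_mem hne
    set q := skewPt (SimpleGraph.cycleGraph n) T with hqdef
    have hcovT : ∀ x : Fin n, ∃ s ∈ T, ∃ j : ℤ, j.natAbs ≤ q ∧ x = s + ((2*j : ℤ) : Fin n) :=
      fun x => (cycle_skewIter hn T q x).mp (hq1 ▸ Set.mem_univ x)
    have hnle : n ≤ T.ncard * (2*q + 1) := card_bound T q hcovT
    apply Nat.find_le
    set a := T.ncard with hadef
    have key : (2*(n:ℤ)) ≤ ((a:ℤ)+q)*((a:ℤ)+q) + ((a:ℤ)+q) := by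
      have h1 : (n : ℤ) ≤ (a:ℤ) * (2*(q:ℤ)+1) := by exact_mod_cast hnle
      nlinarith [hz ((a:ℤ)-(q:ℤ))]
    have : 2*n ≤ (a+q)*(a+q) + (a+q) := by exact_mod_cast key
    exact this
  have hth : skewTh (SimpleGraph.cycleGraph n) = N := by
    have hmem : (S.ncard + skewPt (SimpleGraph.cycleGraph n) S) ∈
        {m | ∃ T : Set (Fin n), IsSkewZFS (SimpleGraph.cycleGraph n) T ∧
          m = T.ncard + skewPt (SimpleGraph.cycleGraph n) T} := ⟨S, hzfs, rfl⟩
    have hle : skewTh (SimpleGraph.cycleGraph n) ≤ N :=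
      le_trans (Nat.sInf_le hmem) (by omega)
    have hge : N ≤ skewTh (SimpleGraph.cycleGraph n) :=
      hlowmem _ (Nat.sInf_mem (⟨_, hmem⟩ :
        {m | ∃ T : Set (Fin n), IsSkewZFS (SimpleGraph.cycleGraph n) T ∧
          m = T.ncard + skewPt (SimpleGraph.cycleGraph n) T}.Nonempty))
    omega
  rw [hth, eq_comm, Int.ceil_eq_iff]
  have hNR : (2:ℝ)*n ≤ (N:ℝ)*(N:ℝ) + N := by exact_mod_cast hNs
  constructor
  · -- (N:ℝ) - 1 < √(2n) - 1/2
    have hlow : ¬ 2*n ≤ (N-1)*(N-1) + (N-1) := Nat.find_min hex (by omega)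
    obtain ⟨M, hM⟩ : ∃ M, N = M + 1 := ⟨N-1, by omega⟩
    have hlow2 : M*M + M + 1 ≤ 2*n := by
      have : N - 1 = M := by omega
      rw [this] at hlow
      omega
    have hlowR : (M:ℝ)*(M:ℝ) + M + 1 ≤ 2*n := by exact_mod_cast hlow2
    have h1 : (N:ℝ) - 1/2 < Real.sqrt (2*n) := by
      rw [Real.lt_sqrt (by
        have : (1:ℝ) ≤ (N:ℝ) := by exact_mod_cast (by omega : 1 ≤ N)
        linarith)]
      have hNM : (N:ℝ) = (M:ℝ) + 1 := by exact_mod_cast hM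
      rw [hNM]
      nlinarith
    push_cast
    linarith
  · -- √(2n) - 1/2 ≤ N
    have h2 : Real.sqrt (2*n) ≤ (N:ℝ) + 1/2 := by
      rw [Real.sqrt_le_iff]
      constructor
      · positivity
      · nlinarith
    push_cast
    linarith
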